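/- Let E, F be vector lattices with F Dedekind complete and S, T positive abstract Uryson operators from E to F. Then for every e ∈ E: π_S T e = sup over ε > 0 of inf{ ρ T f + ρ^⊥ T e : ρ S(e − f) ≤ ε Se, f a fragment of e, ρ a band projection on F }, where π_S is the band projection onto the band generated by S in U(E,F). -/

import Mathlib

/-- Orthogonal additivity: `T (x + y) = T x + T y` whenever `|x| ⊓ |y| = 0`. -/
def OrthAdd {E F : Type*} [Lattice E] [AddCommGroup E] [AddCommGroup F]
    (T : E → F) : Prop :=
  ∀ x y : E, |x| ⊓ |y| = 0 → T (x + y) = T x + T y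

/-- `T` maps order bounded sets to order bounded sets. -/
def OrderBoundedMap {E F : Type*} [Preorder E] [Preorder F] (T : E → F) : Prop :=
  ∀ a b : E, ∃ c d : F, ∀ x ∈ Set.Icc a b, T x ∈ Set.Icc c d

/-- An abstract Uryson operator: orthogonally additive and order bounded. -/
def Uryson {E F : Type*} [Lattice E] [AddCommGroup E] [Lattice F] [AddCommGroup F]
    (T : E → F) : Prop :=
  OrthAdd T ∧ OrderBoundedMap T

/-- `z` is a fragment (component) of `x`: `z ⊥ (x - z)`. -/
def Fragment {E : Type*} [Lattice E] [AddCommGroup E] (z x : E) : Prop :=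
  |z| ⊓ |x - z| = 0

/-- A band (order) projection on a Dedekind complete vector lattice `F`:
additive, idempotent, and `0 ≤ ρ x ≤ x` for all `x ≥ 0`. -/
def IsBandProj {F : Type*} [Lattice F] [AddCommGroup F] (ρ : F → F) : Prop :=
  (∀ x y : F, ρ (x + y) = ρ x + ρ y) ∧ (∀ x, ρ (ρ x) = ρ x) ∧
    ∀ x : F, 0 ≤ x → 0 ≤ ρ x ∧ ρ x ≤ x

/-- Disjointness of two positive abstract Uryson operators `T, S` in `U(E,F)`:
`T ⊓ S = 0`, i.e. every abstract Uryson operator `R` with `R ≤ T` and `R ≤ S`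
(pointwise, which is the order of `U(E,F)`) satisfies `R ≤ 0`. -/
def UDisjointPos {E F : Type*} [Lattice E] [AddCommGroup E] [Lattice F] [AddCommGroup F]
    (T S : E → F) : Prop :=
  ∀ R : E → F, Uryson R → (∀ x, R x ≤ T x) → (∀ x, R x ≤ S x) → ∀ x, R x ≤ 0

set_option linter.unusedSectionVars false
set_option linter.unusedVariables false

section LG
variable {α : Type*} [Lattice α] [AddCommGroup α] [CovariantClass α α (· + ·) (· ≤ ·)]

lemma lg_sub_inf_self (a b : α) : a - a ⊓ b = (a - b)⁺ := by
  rw [sub_inf, sub_self, posPart_def, sup_comm]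

lemma lg_inf_add_posPart (a b : α) : a ⊓ b + (a - b)⁺ = a := by
  rw [← lg_sub_inf_self]; abel

lemma lg_inf_add_inf {a b c : α} (ha : 0 ≤ a) (hb : 0 ≤ b) (hc : 0 ≤ c) :
    (a + b) ⊓ c ≤ a ⊓ c + b ⊓ c := by
  have h : a ⊓ c + b ⊓ c = ((a + b) ⊓ (a + c)) ⊓ ((c + b) ⊓ (c + c)) := by
    rw [inf_add, add_inf, add_inf]
  rw [h]
  refine le_inf (le_inf inf_le_left ?_) (le_inf ?_ ?_)
  · exact inf_le_right.trans (le_add_of_nonneg_left ha)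
  · exact inf_le_right.trans (le_add_of_nonneg_right hb)
  · exact inf_le_right.trans (le_add_of_nonneg_left hc)

lemma lg_disjoint_add_left {a b c : α} (ha : 0 ≤ a) (hb : 0 ≤ b) (hc : 0 ≤ c)
    (hac : a ⊓ c = 0) (hbc : b ⊓ c = 0) : (a + b) ⊓ c = 0 :=
  le_antisymm (by simpa [hac, hbc] using lg_inf_add_inf ha hb hc)
    (le_inf (add_nonneg ha hb) hc)

lemma lg_disjoint_add_right {a b c : α} (ha : 0 ≤ a) (hb : 0 ≤ b) (hc : 0 ≤ c)
    (hca : c ⊓ a = 0) (hcb : c ⊓ b = 0) : c ⊓ (a + b) = 0 := by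
  rw [inf_comm]
  exact lg_disjoint_add_left ha hb hc (by rw [inf_comm]; exact hca) (by rw [inf_comm]; exact hcb)

lemma lg_disjoint_nsmul {a b : α} (ha : 0 ≤ a) (hb : 0 ≤ b) (hab : a ⊓ b = 0) (n : ℕ) :
    (n • a) ⊓ b = 0 := by
  induction n with
  | zero => rw [zero_nsmul]; exact inf_eq_left.mpr hb
  | succ n ih =>
      rw [succ_nsmul]
      exact lg_disjoint_add_left (nsmul_nonneg ha n) ha hb ih hab

lemma lg_posPart_le {a b : α} (h : a ≤ b) (hb : 0 ≤ b) : a⁺ ≤ b := sup_le h hb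

lemma lg_posPart_le_abs (a : α) : a⁺ ≤ |a| :=
  sup_le (le_abs_self a) (abs_nonneg a)

lemma lg_negPart_le_abs (a : α) : a⁻ ≤ |a| := by
  rw [← posPart_neg, ← abs_neg]; exact lg_posPart_le_abs _

lemma lg_posPart_of_disjoint {p q : α} (hpq : p ⊓ q = 0) : (p - q)⁺ = p := by
  rw [← lg_sub_inf_self, hpq, sub_zero]

lemma lg_negPart_of_disjoint {p q : α} (hpq : p ⊓ q = 0) : (p - q)⁻ = q := by
  rw [← posPart_neg, neg_sub]
  exact lg_posPart_of_disjoint (by rw [inf_comm]; exact hpq)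

lemma lg_abs_of_disjoint {p q : α} (hpq : p ⊓ q = 0) : |p - q| = p + q := by
  rw [← posPart_add_negPart, lg_posPart_of_disjoint hpq, lg_negPart_of_disjoint hpq]

lemma lg_abs_sub_le (a b : α) : |a - b| ≤ |a| + |b| := by
  rw [sub_eq_add_neg]
  exact (abs_add_le a (-b)).trans (by rw [abs_neg])

lemma lg_le_add_posPart (a b : α) : a ≤ b + (a - b)⁺ :=
  calc a = b + (a - b) := by abel
  _ ≤ b + (a - b)⁺ := add_le_add_right (le_posPart _) b

lemma lg_posPart_add_of_disjoint {a b : α} (h : |a| ⊓ |b| = 0) :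
    (a + b)⁺ = a⁺ + b⁺ ∧ (a + b)⁻ = a⁻ + b⁻ ∧ |a + b| = |a| + |b| := by
  have habs : ∀ u v : α, |u| ⊓ |v| = 0 → u⁺ ⊓ v⁻ = 0 := by
    intro u v huv
    refine le_antisymm ?_ (le_inf (posPart_nonneg u) (negPart_nonneg v))
    exact le_trans (inf_le_inf (lg_posPart_le_abs u) (lg_negPart_le_abs v)) huv.le
  have hba : |b| ⊓ |a| = 0 := by rw [inf_comm]; exact h
  have h1 : a⁺ ⊓ b⁻ = 0 := habs a b h
  have h2 : b⁺ ⊓ a⁻ = 0 := habs b a hba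
  have h3 : a⁺ ⊓ a⁻ = 0 := posPart_inf_negPart_eq_zero a
  have h4 : b⁺ ⊓ b⁻ = 0 := posPart_inf_negPart_eq_zero b
  have hP : (a⁺ + b⁺) ⊓ (a⁻ + b⁻) = 0 := by
    refine lg_disjoint_add_left (posPart_nonneg a) (posPart_nonneg b)
      (add_nonneg (negPart_nonneg a) (negPart_nonneg b)) ?_ ?_
    · exact lg_disjoint_add_right (negPart_nonneg a) (negPart_nonneg b) (posPart_nonneg a) h3 h1
    · exact lg_disjoint_add_right (negPart_nonneg a) (negPart_nonneg b) (posPart_nonneg b)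
        h2 h4
  have hsum : a + b = (a⁺ + b⁺) - (a⁻ + b⁻) := by
    conv_lhs => rw [← posPart_sub_negPart a, ← posPart_sub_negPart b]
    abel
  refine ⟨?_, ?_, ?_⟩
  · rw [hsum]; exact lg_posPart_of_disjoint hP
  · rw [hsum]; exact lg_negPart_of_disjoint hP
  · rw [hsum, lg_abs_of_disjoint hP, ← posPart_add_negPart a, ← posPart_add_negPart b]
    abel

lemma lg_inf_add_eq {c a b : α} (hc : 0 ≤ c) (ha : 0 ≤ a) (hb : 0 ≤ b) (hab : a ⊓ b = 0) :
    c ⊓ (a + b) = c ⊓ a + c ⊓ b := by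
  refine le_antisymm ?_ ?_
  · rw [inf_comm c (a+b), inf_comm c a, inf_comm c b]; exact lg_inf_add_inf ha hb hc
  · refine le_inf ?_ (add_le_add inf_le_right inf_le_right)
    have hba : b ⊓ a = 0 := by rw [inf_comm]; exact hab
    have hcba : (c ⊓ b) ⊓ a = 0 := by
      refine le_antisymm ?_ (le_inf (le_inf hc hb) ha)
      exact le_trans (inf_le_inf_right a inf_le_right) hba.le
    have heq : c ⊓ b = ((c ⊓ b) - a)⁺ := by rw [← lg_sub_inf_self, hcba, sub_zero]
    have h2 : c ⊓ b ≤ (c - a)⁺ := by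
      rw [heq]; exact posPart_mono (sub_le_sub_right inf_le_left a)
    calc c ⊓ a + c ⊓ b ≤ c ⊓ a + (c - a)⁺ := add_le_add_right h2 _
    _ = c ⊓ a + (c - c ⊓ a) := by rw [lg_sub_inf_self]
    _ = c := by abel

lemma lg_decomp_le {c a b : α} (hc : 0 ≤ c) (ha : 0 ≤ a) (hb : 0 ≤ b) (hab : a ⊓ b = 0)
    (hle : c ≤ a + b) : c = c ⊓ a + c ⊓ b := by
  rw [← lg_inf_add_eq hc ha hb hab, inf_eq_left.mpr hle]

end LG
section CCL
variable {α : Type*} [ConditionallyCompleteLattice α] [AddCommGroup α]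
  [CovariantClass α α (· + ·) (· ≤ ·)]

/-- Archimedean-type property of conditionally complete lattice groups. -/
lemma ccl_arch {v c : α} (h : ∀ n : ℕ, n • v ≤ c) : v ≤ 0 := by
  have hne : (Set.range fun n : ℕ => n • v).Nonempty := ⟨0 • v, ⟨0, rfl⟩⟩
  have hbdd : BddAbove (Set.range fun n : ℕ => n • v) := ⟨c, by rintro _ ⟨n, rfl⟩; exact h n⟩
  set s := sSup (Set.range fun n : ℕ => n • v) with hs
  have hle : ∀ n : ℕ, n • v ≤ s - v := by
    intro n
    have : (n + 1) • v ≤ s := le_csSup hbdd ⟨n + 1, rfl⟩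
    rw [succ_nsmul] at this
    exact le_sub_iff_add_le.mpr this
  have : s ≤ s - v := csSup_le hne (by rintro _ ⟨n, rfl⟩; exact hle n)
  have := add_le_add_left this v
  rw [sub_add_cancel] at this
  exact le_of_add_le_add_left (a := s) (by simpa [add_comm] using this)

lemma ccl_le_of_forall_le_smul [Module ℝ α] [PosSMulMono ℝ α] {v c : α} (hc : 0 ≤ c)
    (h : ∀ n : ℕ, 0 < n → v ≤ (1 / (n:ℝ)) • c) : v ≤ 0 := by
  refine ccl_arch (c := c) ?_
  intro n
  cases n with
  | zero => simpa using hc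
  | succ m =>
    have h1 : v ≤ (1 / ((m+1 :ℕ):ℝ)) • c := h (m+1) (Nat.succ_pos m)
    have h2 : ((m+1:ℕ) : ℝ) • v ≤ ((m+1:ℕ):ℝ) • ((1 / ((m+1:ℕ):ℝ)) • c) :=
      smul_le_smul_of_nonneg_left h1 (by positivity)
    rw [smul_smul] at h2
    have : ((m+1:ℕ):ℝ) * (1 / ((m+1:ℕ):ℝ)) = 1 := by
      field_simp
    rw [this, one_smul] at h2
    calc (m+1) • v = ((m+1:ℕ):ℝ) • v := (Nat.cast_smul_eq_nsmul ℝ _ _).symm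
    _ ≤ c := h2

/-- meet distributes over sSup (inequality form). -/
lemma ccl_csSup_inf_le {A : Set α} (hne : A.Nonempty) (hbdd : BddAbove A) (z : α) :
    sSup A ⊓ z ≤ sSup ((fun a => a ⊓ z) '' A) := by
  have hbddi : BddAbove ((fun a => a ⊓ z) '' A) := ⟨z, by rintro _ ⟨a, _, rfl⟩; exact inf_le_right⟩
  have key : sSup A ≤ sSup ((fun a => a ⊓ z) '' A) + (sSup A ⊔ z) - z := by
    refine csSup_le hne fun a ha => ?_
    have h1 : a = a ⊓ z + (a ⊔ z) - z := by rw [inf_add_sup]; abel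
    rw [h1]
    have h2 : a ⊓ z ≤ sSup ((fun a => a ⊓ z) '' A) := le_csSup hbddi ⟨a, ha, rfl⟩
    have h3 : a ⊔ z ≤ sSup A ⊔ z := sup_le_sup_right (le_csSup hbdd ha) z
    exact sub_le_sub_right (add_le_add h2 h3) z
  have h4 : sSup A ⊓ z = sSup A + z - (sSup A ⊔ z) := by rw [← inf_add_sup]; abel
  rw [h4]
  have := sub_le_sub_right (add_le_add_left key z) (sSup A ⊔ z)
  calc sSup A + z - (sSup A ⊔ z)
      ≤ sSup ((fun a => a ⊓ z) '' A) + (sSup A ⊔ z) - z + z - (sSup A ⊔ z) := this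
  _ = sSup ((fun a => a ⊓ z) '' A) := by abel

end CCL

section PP
variable {α : Type*} [ConditionallyCompleteLattice α] [AddCommGroup α]
  [CovariantClass α α (· + ·) (· ≤ ·)]

/-- The principal "band projection" of `x` onto the band generated by `u` (for `0 ≤ x`). -/
noncomputable def ppr (u x : α) : α := sSup (Set.range fun n : ℕ => x ⊓ n • u)

variable {u x y : α}

lemma ppr_bdd (hx : 0 ≤ x) (u : α) : BddAbove (Set.range fun n : ℕ => x ⊓ n • u) :=
  ⟨x, by rintro _ ⟨n, rfl⟩; exact inf_le_left⟩

lemma ppr_le_self (hx : 0 ≤ x) (u : α) : ppr u x ≤ x :=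
  csSup_le ⟨x ⊓ 0 • u, ⟨0, rfl⟩⟩ (by rintro _ ⟨n, rfl⟩; exact inf_le_left)

lemma le_ppr (hx : 0 ≤ x) (u : α) (n : ℕ) : x ⊓ n • u ≤ ppr u x :=
  le_csSup (ppr_bdd hx u) ⟨n, rfl⟩

lemma ppr_nonneg (hx : 0 ≤ x) (u : α) : 0 ≤ ppr u x := by
  have := le_ppr hx u 0
  rwa [zero_nsmul, inf_eq_right.mpr hx] at this

lemma ppr_zero (u : α) : ppr u 0 = 0 :=
  le_antisymm (ppr_le_self le_rfl u) (ppr_nonneg le_rfl u)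

lemma ppr_mono (hx : 0 ≤ x) (hxy : x ≤ y) (u : α) : ppr u x ≤ ppr u y := by
  refine csSup_le ⟨x ⊓ 0 • u, ⟨0, rfl⟩⟩ ?_
  rintro _ ⟨n, rfl⟩
  exact le_trans (inf_le_inf_right _ hxy) (le_ppr (hx.trans hxy) u n)

lemma ppr_add (hu : 0 ≤ u) (hx : 0 ≤ x) (hy : 0 ≤ y) :
    ppr u (x + y) = ppr u x + ppr u y := by
  have hxy : 0 ≤ x + y := add_nonneg hx hy
  refine le_antisymm ?_ ?_
  · refine csSup_le ⟨(x+y) ⊓ 0 • u, ⟨0, rfl⟩⟩ ?_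
    rintro _ ⟨n, rfl⟩
    calc (x + y) ⊓ n • u ≤ x ⊓ n • u + y ⊓ n • u :=
          lg_inf_add_inf hx hy (nsmul_nonneg hu n)
    _ ≤ ppr u x + ppr u y := add_le_add (le_ppr hx u n) (le_ppr hy u n)
  · have key : ∀ n m : ℕ, x ⊓ n • u + y ⊓ m • u ≤ ppr u (x + y) := by
      intro n m
      have h1 : x ⊓ n • u + y ⊓ m • u ≤ (x + y) ⊓ ((n + m) • u) := by
        refine le_inf (add_le_add inf_le_left inf_le_left) ?_
        rw [add_nsmul]
        exact add_le_add inf_le_right inf_le_right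
      exact h1.trans (le_ppr hxy u (n+m))
    have step1 : ∀ m : ℕ, ppr u x + y ⊓ m • u ≤ ppr u (x + y) := by
      intro m
      have : ∀ n : ℕ, x ⊓ n • u ≤ ppr u (x+y) - y ⊓ m • u := fun n =>
        le_sub_iff_add_le.mpr (key n m)
      have h2 : ppr u x ≤ ppr u (x+y) - y ⊓ m • u :=
        csSup_le ⟨x ⊓ 0 • u, ⟨0, rfl⟩⟩ (by rintro _ ⟨n, rfl⟩; exact this n)
      have := add_le_add_left h2 (y ⊓ m • u)
      rwa [sub_add_cancel] at this
    have : ∀ m : ℕ, y ⊓ m • u ≤ ppr u (x+y) - ppr u x := fun m =>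
      le_sub_iff_add_le.mpr (by rw [add_comm]; exact step1 m)
    have h3 : ppr u y ≤ ppr u (x+y) - ppr u x :=
      csSup_le ⟨y ⊓ 0 • u, ⟨0, rfl⟩⟩ (by rintro _ ⟨n, rfl⟩; exact this n)
    have := add_le_add_left h3 (ppr u x)
    rw [sub_add_cancel] at this
    rwa [add_comm] at this

lemma ppr_idem (hu : 0 ≤ u) (hx : 0 ≤ x) : ppr u (ppr u x) = ppr u x := by
  refine le_antisymm (ppr_le_self (ppr_nonneg hx u) u) ?_
  refine csSup_le ⟨x ⊓ 0 • u, ⟨0, rfl⟩⟩ ?_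
  rintro _ ⟨n, rfl⟩
  exact (le_inf (le_ppr hx u n) inf_le_right).trans (le_ppr (ppr_nonneg hx u) u n)

lemma le_ppr_of_le (hu : 0 ≤ u) (hx : 0 ≤ x) (h : u ≤ x) : u ≤ ppr u x := by
  have h2 := le_ppr hx u 1
  rwa [one_nsmul, inf_eq_right.mpr h] at h2

lemma ppr_self (hu : 0 ≤ u) : ppr u u = u :=
  le_antisymm (ppr_le_self hu u) (le_ppr_of_le hu hu le_rfl)

lemma ppr_compl_disjoint (hu : 0 ≤ u) (hx : 0 ≤ x) : (x - ppr u x) ⊓ u = 0 := by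
  set d := x - ppr u x with hd
  have hd0 : 0 ≤ d := sub_nonneg.mpr (ppr_le_self hx u)
  refine le_antisymm ?_ (le_inf hd0 hu)
  have key : ∀ n : ℕ, x ⊓ n • u + d ⊓ u ≤ x ⊓ ((n+1) • u) := by
    intro n
    refine le_inf ?_ ?_
    · calc x ⊓ n • u + d ⊓ u ≤ ppr u x + d := add_le_add (le_ppr hx u n) inf_le_left
      _ = x := by rw [hd]; abel
    · rw [succ_nsmul]; exact add_le_add inf_le_right inf_le_right
  have h1 : ∀ n : ℕ, x ⊓ n • u ≤ ppr u x - d ⊓ u := fun n =>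
    le_sub_iff_add_le.mpr ((key n).trans (le_ppr hx u (n+1)))
  have h2 : ppr u x ≤ ppr u x - d ⊓ u :=
    csSup_le ⟨x ⊓ 0 • u, ⟨0, rfl⟩⟩ (by rintro _ ⟨n, rfl⟩; exact h1 n)
  have := add_le_add_left h2 (d ⊓ u)
  rw [sub_add_cancel] at this
  exact le_of_add_le_add_left (a := ppr u x) (by simpa [add_comm] using this)

lemma ppr_of_disjoint (hu : 0 ≤ u) (hx : 0 ≤ x) (h : x ⊓ u = 0) : ppr u x = 0 := by
  refine le_antisymm ?_ (ppr_nonneg hx u)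
  refine csSup_le ⟨x ⊓ 0 • u, ⟨0, rfl⟩⟩ ?_
  rintro _ ⟨n, rfl⟩
  show x ⊓ n • u ≤ 0
  rw [inf_comm] at h ⊢
  exact (lg_disjoint_nsmul hu hx h n).le

lemma ppr_disjoint_of_disjoint {v : α} (hu : 0 ≤ u) (hx : 0 ≤ x) (hv : 0 ≤ v)
    (huv : u ⊓ v = 0) : ppr u x ⊓ v = 0 := by
  refine le_antisymm ?_ (le_inf (ppr_nonneg hx u) hv)
  have h1 : ppr u x ⊓ v ≤ sSup ((fun a => a ⊓ v) '' (Set.range fun n : ℕ => x ⊓ n • u)) :=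
    ccl_csSup_inf_le (A := Set.range fun n : ℕ => x ⊓ n • u) ⟨x ⊓ 0 • u, ⟨0, rfl⟩⟩ (ppr_bdd hx u) v
  refine h1.trans (csSup_le ⟨(x ⊓ 0 • u) ⊓ v, Set.mem_image_of_mem _ ⟨0, rfl⟩⟩ ?_)
  rintro _ ⟨_, ⟨n, rfl⟩, rfl⟩
  calc (x ⊓ n • u) ⊓ v ≤ (n • u) ⊓ v := inf_le_inf_right v inf_le_right
  _ = 0 := lg_disjoint_nsmul hu hv huv n

/-- member of the band generated by `u` dominated by `x` is dominated by `ppr u x`. -/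
lemma le_ppr_of_band (hu : 0 ≤ u) (hx : 0 ≤ x) {r : α} (hr : 0 ≤ r) (hrx : r ≤ x)
    (hband : ppr u r = r) : r ≤ ppr u x := by
  rw [← hband]
  refine csSup_le ⟨r ⊓ 0 • u, ⟨0, rfl⟩⟩ ?_
  rintro _ ⟨n, rfl⟩
  exact (inf_le_inf_right _ hrx).trans (le_ppr hx u n)

end PP

section BPR
variable {α : Type*} [ConditionallyCompleteLattice α] [AddCommGroup α]
  [CovariantClass α α (· + ·) (· ≤ ·)]

/-- band projection onto the band generated by `u`, defined on all of `α`. -/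
noncomputable def bpr (u x : α) : α := ppr u x⁺ - ppr u x⁻

variable {u x y : α}

lemma bpr_of_nonneg (hx : 0 ≤ x) (u : α) : bpr u x = ppr u x := by
  rw [bpr, posPart_eq_self.mpr hx, negPart_eq_zero.mpr hx, ppr_zero, sub_zero]

lemma bpr_eq_of_sub (hu : 0 ≤ u) {a b c d : α} (ha : 0 ≤ a) (hb : 0 ≤ b) (hc : 0 ≤ c)
    (hd : 0 ≤ d) (h : a - b = c - d) : ppr u a - ppr u b = ppr u c - ppr u d := by
  have h1 : a + d = c + b := sub_eq_sub_iff_add_eq_add.mp h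
  have h2 : ppr u a + ppr u d = ppr u c + ppr u b := by
    rw [← ppr_add hu ha hd, ← ppr_add hu hc hb, h1]
  exact sub_eq_sub_iff_add_eq_add.mpr h2

lemma bpr_add (hu : 0 ≤ u) (x y : α) : bpr u (x + y) = bpr u x + bpr u y := by
  have key : ppr u (x+y)⁺ - ppr u (x+y)⁻ =
      ppr u (x⁺ + y⁺) - ppr u (x⁻ + y⁻) := by
    refine bpr_eq_of_sub hu (posPart_nonneg _) (negPart_nonneg _)
      (add_nonneg (posPart_nonneg _) (posPart_nonneg _))
      (add_nonneg (negPart_nonneg _) (negPart_nonneg _)) ?_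
    rw [posPart_sub_negPart]
    conv_lhs => rw [← posPart_sub_negPart x, ← posPart_sub_negPart y]
    abel
  rw [bpr, key, ppr_add hu (posPart_nonneg _) (posPart_nonneg _),
    ppr_add hu (negPart_nonneg _) (negPart_nonneg _), bpr, bpr]
  abel

lemma bpr_sub (hu : 0 ≤ u) (x y : α) : bpr u (x - y) = bpr u x - bpr u y := by
  have h := bpr_add hu (x - y) y
  rw [sub_add_cancel] at h
  rw [h]; abel

lemma bpr_idem (hu : 0 ≤ u) (x : α) : bpr u (bpr u x) = bpr u x :=
  calc bpr u (bpr u x) = bpr u (ppr u x⁺ - ppr u x⁻) := rfl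
  _ = bpr u (ppr u x⁺) - bpr u (ppr u x⁻) := bpr_sub hu _ _
  _ = ppr u (ppr u x⁺) - ppr u (ppr u x⁻) := by
      rw [bpr_of_nonneg (ppr_nonneg (posPart_nonneg x) u),
        bpr_of_nonneg (ppr_nonneg (negPart_nonneg x) u)]
  _ = ppr u x⁺ - ppr u x⁻ := by
      rw [ppr_idem hu (posPart_nonneg x), ppr_idem hu (negPart_nonneg x)]
  _ = bpr u x := rfl

/-- The complement of the band projection, as used in the theorem. -/
noncomputable def cpr (u : α) : α → α := fun x => x - bpr u x

lemma cpr_isBandProj (hu : 0 ≤ u) : IsBandProj (cpr u) := by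
  refine ⟨fun x y => ?_, fun x => ?_, fun x hx => ?_⟩
  · simp only [cpr, bpr_add hu]; abel
  · simp only [cpr, bpr_sub hu, bpr_idem hu]; abel
  · constructor
    · simp only [cpr, bpr_of_nonneg hx]
      exact sub_nonneg.mpr (ppr_le_self hx u)
    · simp only [cpr, bpr_of_nonneg hx]
      exact sub_le_self x (ppr_nonneg hx u)

lemma cpr_apply_nonneg (hu : 0 ≤ u) (hx : 0 ≤ x) : cpr u x = x - ppr u x := by
  simp only [cpr, bpr_of_nonneg hx]

end BPR

section FRAG
variable {E : Type*} [Lattice E] [AddCommGroup E] [CovariantClass E E (· + ·) (· ≤ ·)]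

lemma frag_zero (x : E) : Fragment 0 x := by
  simp [Fragment]

lemma frag_self (x : E) : Fragment x x := by
  simp [Fragment]

lemma frag_compl {f x : E} (h : Fragment f x) : Fragment (x - f) x := by
  unfold Fragment at *
  rw [show x - (x - f) = f by abel, inf_comm]
  exact h

lemma frag_abs_add {f x : E} (h : Fragment f x) : |f| + |x - f| = |x| := by
  have h2 := (lg_posPart_add_of_disjoint h).2.2
  rw [show f + (x - f) = x by abel] at h2
  exact h2.symm

lemma frag_abs_le {f x : E} (h : Fragment f x) : |f| ≤ |x| := by
  rw [← frag_abs_add h]; exact le_add_of_nonneg_right (abs_nonneg _)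

lemma frag_abs_le' {f x : E} (h : Fragment f x) : |x - f| ≤ |x| := frag_abs_le (frag_compl h)

/-- combining fragments of disjoint elements -/
lemma frag_add {x y h₁ h₂ : E} (hxy : |x| ⊓ |y| = 0) (hf₁ : Fragment h₁ x)
    (hf₂ : Fragment h₂ y) : Fragment (h₁ + h₂) (x + y) ∧ |h₁| ⊓ |h₂| = 0 ∧
      |x - h₁| ⊓ |y - h₂| = 0 := by
  have d1 : |h₁| ⊓ |h₂| = 0 := by
    refine le_antisymm (le_trans (inf_le_inf (frag_abs_le hf₁) (frag_abs_le hf₂)) hxy.le)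
      (le_inf (abs_nonneg _) (abs_nonneg _))
  have d2 : |x - h₁| ⊓ |y - h₂| = 0 := by
    refine le_antisymm (le_trans (inf_le_inf (frag_abs_le' hf₁) (frag_abs_le' hf₂)) hxy.le)
      (le_inf (abs_nonneg _) (abs_nonneg _))
  refine ⟨?_, d1, d2⟩
  unfold Fragment
  have hrw : x + y - (h₁ + h₂) = (x - h₁) + (y - h₂) := by abel
  rw [hrw]
  have d3 : |h₁| ⊓ |y - h₂| = 0 := by
    refine le_antisymm (le_trans (inf_le_inf (frag_abs_le hf₁) (frag_abs_le' hf₂)) hxy.le)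
      (le_inf (abs_nonneg _) (abs_nonneg _))
  have d4 : |h₂| ⊓ |x - h₁| = 0 := by
    refine le_antisymm ?_ (le_inf (abs_nonneg _) (abs_nonneg _))
    refine le_trans (inf_le_inf (frag_abs_le hf₂) (frag_abs_le' hf₁)) ?_
    rw [inf_comm]; exact hxy.le
  refine le_antisymm ?_ (le_inf (abs_nonneg _) (abs_nonneg _))
  calc |h₁ + h₂| ⊓ |x - h₁ + (y - h₂)| ≤ (|h₁| + |h₂|) ⊓ (|x - h₁| + |y - h₂|) :=
        inf_le_inf (abs_add_le _ _) (abs_add_le _ _)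
  _ = 0 := by
      refine lg_disjoint_add_left (abs_nonneg _) (abs_nonneg _)
        (add_nonneg (abs_nonneg _) (abs_nonneg _)) ?_ ?_
      · exact lg_disjoint_add_right (abs_nonneg _) (abs_nonneg _) (abs_nonneg _) hf₁ d3
      · exact lg_disjoint_add_right (abs_nonneg _) (abs_nonneg _) (abs_nonneg _) d4 hf₂

/-- splitting a fragment of a sum of disjoint elements -/
lemma frag_split {x y g : E} (hxy : |x| ⊓ |y| = 0) (hg : Fragment g (x + y)) :
    ∃ g₁ g₂ : E, g = g₁ + g₂ ∧ Fragment g₁ x ∧ Fragment g₂ y ∧ |g₁| ⊓ |g₂| = 0 ∧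
      |x - g₁| ⊓ |y - g₂| = 0 := by
  set z := x + y with hz
  set g' := z - g with hg'
  have hgg' : |g| ⊓ |g'| = 0 := hg
  have hzg : g + g' = z := by rw [hg']; abel
  have hzx := lg_posPart_add_of_disjoint hxy
  have hzg2 := lg_posPart_add_of_disjoint hgg'
  rw [hzg] at hzg2
  -- disjointness of parts
  have pxy : x⁺ ⊓ y⁺ = 0 := le_antisymm
    (le_trans (inf_le_inf (lg_posPart_le_abs x) (lg_posPart_le_abs y)) hxy.le)
    (le_inf (posPart_nonneg _) (posPart_nonneg _))
  have nxy : x⁻ ⊓ y⁻ = 0 := le_antisymm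
    (le_trans (inf_le_inf (lg_negPart_le_abs x) (lg_negPart_le_abs y)) hxy.le)
    (le_inf (negPart_nonneg _) (negPart_nonneg _))
  have hgz : g⁺ ≤ x⁺ + y⁺ := by
    rw [← hzx.1, ← hz, hzg2.1]
    exact le_add_of_nonneg_right (posPart_nonneg _)
  have hgzn : g⁻ ≤ x⁻ + y⁻ := by
    rw [← hzx.2.1, ← hz, hzg2.2.1]
    exact le_add_of_nonneg_right (negPart_nonneg _)
  have hdecp : g⁺ = g⁺ ⊓ x⁺ + g⁺ ⊓ y⁺ :=
    lg_decomp_le (posPart_nonneg _) (posPart_nonneg _) (posPart_nonneg _) pxy hgz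
  have hdecn : g⁻ = g⁻ ⊓ x⁻ + g⁻ ⊓ y⁻ :=
    lg_decomp_le (negPart_nonneg _) (negPart_nonneg _) (negPart_nonneg _) nxy hgzn
  set p₁ := g⁺ ⊓ x⁺ with hp₁
  set q₁ := g⁻ ⊓ x⁻ with hq₁
  set p₂ := g⁺ ⊓ y⁺ with hp₂
  set q₂ := g⁻ ⊓ y⁻ with hq₂
  have hp₁0 : 0 ≤ p₁ := le_inf (posPart_nonneg _) (posPart_nonneg _)
  have hq₁0 : 0 ≤ q₁ := le_inf (negPart_nonneg _) (negPart_nonneg _)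
  have hp₂0 : 0 ≤ p₂ := le_inf (posPart_nonneg _) (posPart_nonneg _)
  have hq₂0 : 0 ≤ q₂ := le_inf (negPart_nonneg _) (negPart_nonneg _)
  refine ⟨p₁ - q₁, p₂ - q₂, ?_, ?_, ?_, ?_, ?_⟩
  · conv_lhs => rw [← posPart_sub_negPart g]
    rw [hdecp, hdecn]; abel
  -- Fragment (p₁ - q₁) x
  · -- generic fragment proof for the x-side
    unfold Fragment
    have hxp : 0 ≤ x⁺ - p₁ := sub_nonneg.mpr inf_le_right
    have hxn : 0 ≤ x⁻ - q₁ := sub_nonneg.mpr inf_le_right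
    have habs1 : |p₁ - q₁| = p₁ + q₁ := lg_abs_of_disjoint
      (le_antisymm (le_trans (inf_le_inf inf_le_right inf_le_right)
        (posPart_inf_negPart_eq_zero x).le) (le_inf hp₁0 hq₁0))
    have hxsub : x - (p₁ - q₁) = (x⁺ - p₁) - (x⁻ - q₁) := by
      conv_lhs => rw [← posPart_sub_negPart x]
      abel
    have habs2 : |x - (p₁ - q₁)| = (x⁺ - p₁) + (x⁻ - q₁) := by
      rw [hxsub]
      refine lg_abs_of_disjoint (le_antisymm ?_ (le_inf hxp hxn))
      exact le_trans (inf_le_inf (sub_le_self _ hp₁0) (sub_le_self _ hq₁0))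
        (posPart_inf_negPart_eq_zero x).le
    rw [habs1, habs2]
    -- four disjointness facts
    have key1 : p₁ ⊓ (x⁺ - p₁) = 0 := by
      have hxpp : x⁺ - p₁ = (x⁺ - g⁺)⁺ := by
        rw [hp₁, inf_comm, lg_sub_inf_self]
      have hle : x⁺ - p₁ ≤ g'⁺ := by
        rw [hxpp]
        have : x⁺ - g⁺ ≤ g'⁺ := by
          have : x⁺ ≤ g⁺ + g'⁺ := by rw [← hzg2.1, hzx.1]; exact le_add_of_nonneg_right (posPart_nonneg _)
          exact sub_le_iff_le_add'.mpr this
        exact lg_posPart_le this (posPart_nonneg _)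
      have hgp : g⁺ ⊓ g'⁺ = 0 := le_antisymm
        (le_trans (inf_le_inf (lg_posPart_le_abs _) (lg_posPart_le_abs _)) hgg'.le)
        (le_inf (posPart_nonneg _) (posPart_nonneg _))
      refine le_antisymm ?_ (le_inf hp₁0 hxp)
      exact le_trans (inf_le_inf inf_le_left hle) hgp.le
    have key2 : q₁ ⊓ (x⁻ - q₁) = 0 := by
      have hxpp : x⁻ - q₁ = (x⁻ - g⁻)⁺ := by
        rw [hq₁, inf_comm, lg_sub_inf_self]
      have hle : x⁻ - q₁ ≤ g'⁻ := by
        rw [hxpp]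
        have h5 : x⁻ ≤ g⁻ + g'⁻ := by rw [← hzg2.2.1, hzx.2.1]; exact le_add_of_nonneg_right (negPart_nonneg _)
        exact lg_posPart_le (sub_le_iff_le_add'.mpr h5) (negPart_nonneg _)
      have hgp : g⁻ ⊓ g'⁻ = 0 := le_antisymm
        (le_trans (inf_le_inf (lg_negPart_le_abs _) (lg_negPart_le_abs _)) hgg'.le)
        (le_inf (negPart_nonneg _) (negPart_nonneg _))
      refine le_antisymm ?_ (le_inf hq₁0 hxn)
      exact le_trans (inf_le_inf inf_le_left hle) hgp.le
    have key3 : p₁ ⊓ (x⁻ - q₁) = 0 := by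
      refine le_antisymm ?_ (le_inf hp₁0 hxn)
      exact le_trans (inf_le_inf inf_le_right (sub_le_self _ hq₁0))
        (posPart_inf_negPart_eq_zero x).le
    have key4 : q₁ ⊓ (x⁺ - p₁) = 0 := by
      refine le_antisymm ?_ (le_inf hq₁0 hxp)
      refine le_trans (inf_le_inf inf_le_right (sub_le_self _ hp₁0)) ?_
      rw [inf_comm]
      exact (posPart_inf_negPart_eq_zero x).le
    refine lg_disjoint_add_left hp₁0 hq₁0 (add_nonneg hxp hxn) ?_ ?_
    · exact lg_disjoint_add_right hxp hxn hp₁0 key1 key3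
    · exact lg_disjoint_add_right hxp hxn hq₁0 key4 key2
  · -- Fragment (p₂ - q₂) y : same proof with y
    unfold Fragment
    have hxp : 0 ≤ y⁺ - p₂ := sub_nonneg.mpr inf_le_right
    have hxn : 0 ≤ y⁻ - q₂ := sub_nonneg.mpr inf_le_right
    have habs1 : |p₂ - q₂| = p₂ + q₂ := lg_abs_of_disjoint
      (le_antisymm (le_trans (inf_le_inf inf_le_right inf_le_right)
        (posPart_inf_negPart_eq_zero y).le) (le_inf hp₂0 hq₂0))
    have hxsub : y - (p₂ - q₂) = (y⁺ - p₂) - (y⁻ - q₂) := by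
      conv_lhs => rw [← posPart_sub_negPart y]
      abel
    have habs2 : |y - (p₂ - q₂)| = (y⁺ - p₂) + (y⁻ - q₂) := by
      rw [hxsub]
      refine lg_abs_of_disjoint (le_antisymm ?_ (le_inf hxp hxn))
      exact le_trans (inf_le_inf (sub_le_self _ hp₂0) (sub_le_self _ hq₂0))
        (posPart_inf_negPart_eq_zero y).le
    rw [habs1, habs2]
    have key1 : p₂ ⊓ (y⁺ - p₂) = 0 := by
      have hxpp : y⁺ - p₂ = (y⁺ - g⁺)⁺ := by
        rw [hp₂, inf_comm, lg_sub_inf_self]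
      have hle : y⁺ - p₂ ≤ g'⁺ := by
        rw [hxpp]
        have h5 : y⁺ ≤ g⁺ + g'⁺ := by rw [← hzg2.1, hzx.1]; exact le_add_of_nonneg_left (posPart_nonneg _)
        exact lg_posPart_le (sub_le_iff_le_add'.mpr h5) (posPart_nonneg _)
      have hgp : g⁺ ⊓ g'⁺ = 0 := le_antisymm
        (le_trans (inf_le_inf (lg_posPart_le_abs _) (lg_posPart_le_abs _)) hgg'.le)
        (le_inf (posPart_nonneg _) (posPart_nonneg _))
      refine le_antisymm ?_ (le_inf hp₂0 hxp)
      exact le_trans (inf_le_inf inf_le_left hle) hgp.le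
    have key2 : q₂ ⊓ (y⁻ - q₂) = 0 := by
      have hxpp : y⁻ - q₂ = (y⁻ - g⁻)⁺ := by
        rw [hq₂, inf_comm, lg_sub_inf_self]
      have hle : y⁻ - q₂ ≤ g'⁻ := by
        rw [hxpp]
        have h5 : y⁻ ≤ g⁻ + g'⁻ := by rw [← hzg2.2.1, hzx.2.1]; exact le_add_of_nonneg_left (negPart_nonneg _)
        exact lg_posPart_le (sub_le_iff_le_add'.mpr h5) (negPart_nonneg _)
      have hgp : g⁻ ⊓ g'⁻ = 0 := le_antisymm
        (le_trans (inf_le_inf (lg_negPart_le_abs _) (lg_negPart_le_abs _)) hgg'.le)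
        (le_inf (negPart_nonneg _) (negPart_nonneg _))
      refine le_antisymm ?_ (le_inf hq₂0 hxn)
      exact le_trans (inf_le_inf inf_le_left hle) hgp.le
    have key3 : p₂ ⊓ (y⁻ - q₂) = 0 := by
      refine le_antisymm ?_ (le_inf hp₂0 hxn)
      exact le_trans (inf_le_inf inf_le_right (sub_le_self _ hq₂0))
        (posPart_inf_negPart_eq_zero y).le
    have key4 : q₂ ⊓ (y⁺ - p₂) = 0 := by
      refine le_antisymm ?_ (le_inf hq₂0 hxp)
      refine le_trans (inf_le_inf inf_le_right (sub_le_self _ hp₂0)) ?_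
      rw [inf_comm]
      exact (posPart_inf_negPart_eq_zero y).le
    refine lg_disjoint_add_left hp₂0 hq₂0 (add_nonneg hxp hxn) ?_ ?_
    · exact lg_disjoint_add_right hxp hxn hp₂0 key1 key3
    · exact lg_disjoint_add_right hxp hxn hq₂0 key4 key2
  · -- |g₁| ⊓ |g₂| = 0
    have h1 : |p₁ - q₁| ≤ |x| := by
      calc |p₁ - q₁| ≤ |p₁| + |q₁| := lg_abs_sub_le _ _
      _ = p₁ + q₁ := by rw [abs_of_nonneg hp₁0, abs_of_nonneg hq₁0]
      _ ≤ x⁺ + x⁻ := add_le_add inf_le_right inf_le_right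
      _ = |x| := posPart_add_negPart x
    have h2 : |p₂ - q₂| ≤ |y| := by
      calc |p₂ - q₂| ≤ |p₂| + |q₂| := lg_abs_sub_le _ _
      _ = p₂ + q₂ := by rw [abs_of_nonneg hp₂0, abs_of_nonneg hq₂0]
      _ ≤ y⁺ + y⁻ := add_le_add inf_le_right inf_le_right
      _ = |y| := posPart_add_negPart y
    exact le_antisymm (le_trans (inf_le_inf h1 h2) hxy.le)
      (le_inf (abs_nonneg _) (abs_nonneg _))
  · -- |x - g₁| ⊓ |y - g₂| = 0
    have h1 : |x - (p₁ - q₁)| ≤ |x| := by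
      have hxs : x - (p₁ - q₁) = (x⁺ - p₁) - (x⁻ - q₁) := by
        conv_lhs => rw [← posPart_sub_negPart x]; 
        abel
      rw [hxs]
      calc |(x⁺ - p₁) - (x⁻ - q₁)| ≤ |x⁺ - p₁| + |x⁻ - q₁| := lg_abs_sub_le _ _
      _ = (x⁺ - p₁) + (x⁻ - q₁) := by
          rw [abs_of_nonneg (sub_nonneg.mpr inf_le_right),
            abs_of_nonneg (sub_nonneg.mpr inf_le_right)]
      _ ≤ x⁺ + x⁻ := add_le_add (sub_le_self _ hp₁0) (sub_le_self _ hq₁0)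
      _ = |x| := posPart_add_negPart x
    have h2 : |y - (p₂ - q₂)| ≤ |y| := by
      have hys : y - (p₂ - q₂) = (y⁺ - p₂) - (y⁻ - q₂) := by
        conv_lhs => rw [← posPart_sub_negPart y]
        abel
      rw [hys]
      calc |(y⁺ - p₂) - (y⁻ - q₂)| ≤ |y⁺ - p₂| + |y⁻ - q₂| := lg_abs_sub_le _ _
      _ = (y⁺ - p₂) + (y⁻ - q₂) := by
          rw [abs_of_nonneg (sub_nonneg.mpr inf_le_right),
            abs_of_nonneg (sub_nonneg.mpr inf_le_right)]
      _ ≤ y⁺ + y⁻ := add_le_add (sub_le_self _ hp₂0) (sub_le_self _ hq₂0)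
      _ = |y| := posPart_add_negPart y
    exact le_antisymm (le_trans (inf_le_inf h1 h2) hxy.le)
      (le_inf (abs_nonneg _) (abs_nonneg _))

end FRAG

section OP
variable {E F : Type*} [Lattice E] [AddCommGroup E]
    [CovariantClass E E (· + ·) (· ≤ ·)]
    [ConditionallyCompleteLattice F] [AddCommGroup F]
    [CovariantClass F F (· + ·) (· ≤ ·)]

lemma orthAdd_zero {A : E → F} (hA : OrthAdd A) : A 0 = 0 := by
  have := hA 0 0 (by simp)
  simpa using this.symm

/-- pointwise infimum over fragments of `A h + B (x - h)`; realizes `(A ⊓ B)(x)`. -/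
noncomputable def phiOp (A B : E → F) (x : E) : F :=
  sInf ((fun h => A h + B (x - h)) '' {h | Fragment h x})

variable {A B : E → F}

lemma phi_set_nonempty (A B : E → F) (x : E) :
    ((fun h => A h + B (x - h)) '' {h | Fragment h x}).Nonempty :=
  ⟨_, Set.mem_image_of_mem _ (frag_self x)⟩

lemma phi_set_bddBelow (hApos : ∀ x, 0 ≤ A x) (hBpos : ∀ x, 0 ≤ B x) (x : E) :
    BddBelow ((fun h => A h + B (x - h)) '' {h | Fragment h x}) :=
  ⟨0, by rintro _ ⟨h, _, rfl⟩; exact add_nonneg (hApos h) (hBpos _)⟩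

lemma phi_le (hApos : ∀ x, 0 ≤ A x) (hBpos : ∀ x, 0 ≤ B x) {h x : E} (hh : Fragment h x) :
    phiOp A B x ≤ A h + B (x - h) :=
  csInf_le (phi_set_bddBelow hApos hBpos x) (Set.mem_image_of_mem _ hh)

lemma phi_nonneg (hApos : ∀ x, 0 ≤ A x) (hBpos : ∀ x, 0 ≤ B x) (x : E) :
    0 ≤ phiOp A B x :=
  le_csInf (phi_set_nonempty A B x) (by rintro _ ⟨h, _, rfl⟩; exact add_nonneg (hApos h) (hBpos _))

lemma phi_le_left (hB : OrthAdd B) (hApos : ∀ x, 0 ≤ A x) (hBpos : ∀ x, 0 ≤ B x) (x : E) :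
    phiOp A B x ≤ A x := by
  have := phi_le hApos hBpos (frag_self x)
  rwa [sub_self, orthAdd_zero hB, add_zero] at this

lemma phi_le_right (hA : OrthAdd A) (hApos : ∀ x, 0 ≤ A x) (hBpos : ∀ x, 0 ≤ B x) (x : E) :
    phiOp A B x ≤ B x := by
  have := phi_le hApos hBpos (frag_zero x)
  rwa [sub_zero, orthAdd_zero hA, zero_add] at this

lemma phi_orthAdd (hA : OrthAdd A) (hB : OrthAdd B) (hApos : ∀ x, 0 ≤ A x)
    (hBpos : ∀ x, 0 ≤ B x) : OrthAdd (phiOp A B) := by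
  intro x y hxy
  refine le_antisymm ?_ ?_
  · -- ≤ : combine fragments
    have key : ∀ h₁ ∈ {h | Fragment h x}, ∀ h₂ ∈ {h | Fragment h y},
        phiOp A B (x + y) ≤ (A h₁ + B (x - h₁)) + (A h₂ + B (y - h₂)) := by
      intro h₁ hh₁ hh₂ hh₂'
      obtain ⟨hfrag, hd12, hd12'⟩ := frag_add hxy hh₁ hh₂'
      have h1 := phi_le hApos hBpos hfrag
      have hAsplit : A (h₁ + hh₂) = A h₁ + A hh₂ := hA _ _ hd12
      have hBsplit : B (x + y - (h₁ + hh₂)) = B (x - h₁) + B (y - hh₂) := by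
        have : x + y - (h₁ + hh₂) = (x - h₁) + (y - hh₂) := by abel
        rw [this]; exact hB _ _ hd12'
      rw [hAsplit, hBsplit] at h1
      calc phiOp A B (x + y) ≤ A h₁ + A hh₂ + (B (x - h₁) + B (y - hh₂)) := h1
      _ = (A h₁ + B (x - h₁)) + (A hh₂ + B (y - hh₂)) := by abel
    -- take infima
    have step1 : ∀ h₁ ∈ {h | Fragment h x},
        phiOp A B (x + y) ≤ (A h₁ + B (x - h₁)) + phiOp A B y := by
      intro h₁ hh₁
      have h2 : ∀ v ∈ ((fun h => A h + B (y - h)) '' {h | Fragment h y}),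
          phiOp A B (x + y) - (A h₁ + B (x - h₁)) ≤ v := by
        rintro _ ⟨h₂, hh₂, rfl⟩
        rw [sub_le_iff_le_add']
        exact key h₁ hh₁ h₂ hh₂
      have h2' := le_csInf (phi_set_nonempty A B y) h2
      rwa [sub_le_iff_le_add'] at h2'
    have houter : ∀ v ∈ ((fun h => A h + B (x - h)) '' {h | Fragment h x}),
        phiOp A B (x + y) - phiOp A B y ≤ v := by
      rintro _ ⟨h₁, hh₁, rfl⟩
      rw [sub_le_iff_le_add']
      calc phiOp A B (x + y) ≤ (A h₁ + B (x - h₁)) + phiOp A B y := step1 h₁ hh₁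
      _ = phiOp A B y + (A h₁ + B (x - h₁)) := add_comm _ _
    have h3 := le_csInf (phi_set_nonempty A B x) houter
    rw [sub_le_iff_le_add'] at h3
    rw [add_comm (phiOp A B x) (phiOp A B y)]
    exact h3
  · -- ≥ : split fragments
    refine le_csInf (phi_set_nonempty A B (x + y)) ?_
    rintro _ ⟨g, hgfrag, rfl⟩
    obtain ⟨g₁, g₂, hgsum, hg₁, hg₂, hd, hd'⟩ := frag_split hxy hgfrag
    have hAsplit : A g = A g₁ + A g₂ := by rw [hgsum]; exact hA _ _ hd
    have hBsplit : B (x + y - g) = B (x - g₁) + B (y - g₂) := by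
      have : x + y - g = (x - g₁) + (y - g₂) := by rw [hgsum]; abel
      rw [this]; exact hB _ _ hd'
    have l1 : phiOp A B x ≤ A g₁ + B (x - g₁) := phi_le hApos hBpos hg₁
    have l2 : phiOp A B y ≤ A g₂ + B (y - g₂) := phi_le hApos hBpos hg₂
    calc phiOp A B x + phiOp A B y ≤ (A g₁ + B (x - g₁)) + (A g₂ + B (y - g₂)) :=
          add_le_add l1 l2
    _ = A g + B (x + y - g) := by rw [hAsplit, hBsplit]; abel

lemma orderBounded_sandwich {Hb G : E → F} (hH : OrderBoundedMap Hb) (h0 : ∀ x, 0 ≤ G x)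
    (hle : ∀ x, G x ≤ Hb x) : OrderBoundedMap G := by
  intro a b
  obtain ⟨c, d, hcd⟩ := hH a b
  exact ⟨0, d ⊔ 0, fun x hx => ⟨h0 x, ((hle x).trans (hcd x hx).2).trans le_sup_left⟩⟩

end OP

section HELP
variable {F : Type*} [ConditionallyCompleteLattice F] [AddCommGroup F]
  [CovariantClass F F (· + ·) (· ≤ ·)]

lemma help_nsmul_le_nsmul {a b : F} (h : a ≤ b) (n : ℕ) : n • a ≤ n • b := by
  induction n with
  | zero => simp
  | succ m ih => rw [succ_nsmul, succ_nsmul]; exact add_le_add ih h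

lemma help_smul_le_smul_scalar [Module ℝ F] [PosSMulMono ℝ F] {c₁ c₂ : ℝ} {v : F}
    (h : c₁ ≤ c₂) (hv : 0 ≤ v) : c₁ • v ≤ c₂ • v := by
  have h1 : 0 ≤ (c₂ - c₁) • v := smul_nonneg (sub_nonneg.mpr h) hv
  calc c₁ • v ≤ c₁ • v + (c₂ - c₁) • v := le_add_of_nonneg_right h1
  _ = c₂ • v := by rw [← add_smul]; ring_nf

lemma bp_zero {ρ : F → F} (hρ : IsBandProj ρ) : ρ 0 = 0 := by
  have := hρ.1 0 0
  rw [add_zero] at this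
  exact left_eq_add.mp this

lemma bp_sub {ρ : F → F} (hρ : IsBandProj ρ) (a b : F) : ρ (a - b) = ρ a - ρ b := by
  have := hρ.1 (a - b) b
  rw [sub_add_cancel] at this
  rw [this]; abel

lemma bp_mono {ρ : F → F} (hρ : IsBandProj ρ) {a b : F} (h : a ≤ b) : ρ a ≤ ρ b := by
  have h1 : 0 ≤ ρ (b - a) := (hρ.2.2 _ (sub_nonneg.mpr h)).1
  rw [bp_sub hρ] at h1
  exact sub_nonneg.mp h1

lemma bp_nsmul {ρ : F → F} (hρ : IsBandProj ρ) (a : F) (n : ℕ) : ρ (n • a) = n • ρ a := by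
  induction n with
  | zero => simpa using bp_zero hρ
  | succ m ih => rw [succ_nsmul, succ_nsmul, hρ.1, ih]

end HELP

section FACTS
variable {E F : Type} [Lattice E] [AddCommGroup E]
    [CovariantClass E E (· + ·) (· ≤ ·)] [Module ℝ E]
    [ConditionallyCompleteLattice F] [AddCommGroup F]
    [CovariantClass F F (· + ·) (· ≤ ·)] [Module ℝ F] [PosSMulMono ℝ F]

lemma help_inv_nsmul_smul {n : ℕ} (hn : 0 < n) (v : F) : (1 / (n:ℝ)) • (n • v) = v := by
  rw [← Nat.cast_smul_eq_nsmul ℝ n v, smul_smul, one_div,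
    inv_mul_cancel₀ (by exact_mod_cast hn.ne' : (n:ℝ) ≠ 0), one_smul]

/-- FACT A: `(G ∧ nS) = 0` pointwise, where `G = T - R`. -/
lemma factA (S : E → F) (hS : Uryson S) (hSpos : ∀ x, 0 ≤ S x)
    (T : E → F) (hT : Uryson T)
    (R : E → F) (hR : Uryson R) (hRT : ∀ x, R x ≤ T x)
    (hcompl : UDisjointPos (fun x => T x - R x) S) (n : ℕ) (hn : 0 < n) (x : E) :
    phiOp (fun z => T z - R z) (fun z => n • S z) x ≤ 0 := by
  set G := fun z => T z - R z with hG
  have hGorth : OrthAdd G := by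
    intro a b hab
    simp only [hG, hT.1 a b hab, hR.1 a b hab]; abel
  have hGpos : ∀ z, 0 ≤ G z := fun z => sub_nonneg.mpr (hRT z)
  have hBorth : OrthAdd (fun z : E => n • S z) := by
    intro a b hab
    simp only [hS.1 a b hab, smul_add]
  have hBpos : ∀ z : E, 0 ≤ n • S z := fun z => nsmul_nonneg (hSpos z) n
  set Φ := phiOp G (fun z => n • S z) with hΦ
  have hΦorth : OrthAdd Φ := phi_orthAdd hGorth hBorth hGpos hBpos
  have hΦpos : ∀ z, 0 ≤ Φ z := phi_nonneg hGpos hBpos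
  have hΦleB : ∀ z, Φ z ≤ n • S z := phi_le_right hGorth hGpos hBpos
  have hΦleG : ∀ z, Φ z ≤ G z := phi_le_left hBorth hGpos hBpos
  set R' := fun z => (1 / (n:ℝ)) • Φ z with hR'
  have hc : (0:ℝ) ≤ 1 / (n:ℝ) := by positivity
  have hR'U : Uryson R' := by
    constructor
    · intro a b hab
      simp only [hR', hΦorth a b hab, smul_add]
    · refine orderBounded_sandwich (Hb := fun z => n • S z) ?_ ?_ ?_
      · intro a b
        obtain ⟨c, d, hcd⟩ := hS.2 a b
        exact ⟨n • c, n • d, fun z hz => ⟨help_nsmul_le_nsmul (hcd z hz).1 n,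
          help_nsmul_le_nsmul (hcd z hz).2 n⟩⟩
      · intro z; exact smul_nonneg hc (hΦpos z)
      · intro z
        calc R' z ≤ (1 / (n:ℝ)) • (n • S z) := smul_le_smul_of_nonneg_left (hΦleB z) hc
        _ = S z := help_inv_nsmul_smul hn (S z)
        _ ≤ n • S z := by
            calc S z = 1 • S z := (one_nsmul _).symm
            _ ≤ n • S z := by
                calc (1:ℕ) • S z ≤ 1 • S z + (n-1) • S z :=
                      le_add_of_nonneg_right (nsmul_nonneg (hSpos z) _)
                _ = n • S z := by rw [← add_nsmul, Nat.add_sub_cancel' hn]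
  have hle1 : ∀ z, R' z ≤ T z - R z := by
    intro z
    calc R' z ≤ (1:ℝ) • Φ z := help_smul_le_smul_scalar (by
          rw [div_le_one (by exact_mod_cast hn)]
          exact_mod_cast Nat.one_le_iff_ne_zero.mpr hn.ne') (hΦpos z)
    _ = Φ z := one_smul ℝ _
    _ ≤ G z := hΦleG z
  have hle2 : ∀ z, R' z ≤ S z := by
    intro z
    calc R' z ≤ (1 / (n:ℝ)) • (n • S z) := smul_le_smul_of_nonneg_left (hΦleB z) hc
    _ = S z := help_inv_nsmul_smul hn (S z)
  have h0 := hcompl R' hR'U hle1 hle2 x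
  have h2 : (n:ℝ) • R' x ≤ (n:ℝ) • (0:F) := smul_le_smul_of_nonneg_left h0 (by positivity)
  rw [smul_zero, hR'] at h2
  have h3 : (n:ℝ) • ((1 / (n:ℝ)) • Φ x) = Φ x := by
    rw [smul_smul, mul_one_div, div_self (by exact_mod_cast hn.ne' : (n:ℝ) ≠ 0), one_smul]
  rwa [h3] at h2

/-- FACT C: `R e = sup_n (R ∧ nS) e`. -/
lemma factC (S : E → F) (hS : Uryson S) (hSpos : ∀ x, 0 ≤ S x)
    (R : E → F) (hR : Uryson R) (hRpos : ∀ x, 0 ≤ R x)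
    (hRband : ∀ U : E → F, Uryson U → (∀ x, 0 ≤ U x) →
      UDisjointPos U S → UDisjointPos R U) (e : E) :
    R e = sSup (Set.range fun n : ℕ => phiOp R (fun z => n • S z) e) := by
  set Rn := fun (n : ℕ) (x : E) => phiOp R (fun z => n • S z) x with hRn
  have hBorth : ∀ n : ℕ, OrthAdd (fun z : E => n • S z) := by
    intro n a b hab; simp only [hS.1 a b hab, smul_add]
  have hBpos : ∀ n : ℕ, ∀ z : E, 0 ≤ n • S z := fun n z => nsmul_nonneg (hSpos z) n
  have hRnorth : ∀ n, OrthAdd (Rn n) := fun n => phi_orthAdd hR.1 (hBorth n) hRpos (hBpos n)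
  have hRnpos : ∀ n x, 0 ≤ Rn n x := fun n => phi_nonneg hRpos (hBpos n)
  have hRnleR : ∀ n x, Rn n x ≤ R x := fun n => phi_le_left (hBorth n) hRpos (hBpos n)
  have hRnle : ∀ (n : ℕ) (x h : E), Fragment h x → Rn n x ≤ R h + n • S (x - h) :=
    fun n x h hh => phi_le hRpos (hBpos n) hh
  have hbdd : ∀ x : E, BddAbove (Set.range fun n : ℕ => Rn n x) :=
    fun x => ⟨R x, by rintro _ ⟨n, rfl⟩; exact hRnleR n x⟩
  set Rsup := fun x => sSup (Set.range fun n : ℕ => Rn n x) with hRsup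
  have hRsupleR : ∀ x, Rsup x ≤ R x :=
    fun x => csSup_le ⟨Rn 0 x, ⟨0, rfl⟩⟩ (by rintro _ ⟨n, rfl⟩; exact hRnleR n x)
  have hRnleRsup : ∀ n x, Rn n x ≤ Rsup x := fun n x => le_csSup (hbdd x) ⟨n, rfl⟩
  have hRsuppos : ∀ x, 0 ≤ Rsup x := fun x => (hRnpos 0 x).trans (hRnleRsup 0 x)
  have hRsuporth : OrthAdd Rsup := by
    intro x y hxy
    have hadd : ∀ n : ℕ, Rn n (x + y) = Rn n x + Rn n y := fun n => hRnorth n x y hxy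
    refine le_antisymm ?_ ?_
    · refine csSup_le ⟨Rn 0 (x+y), ⟨0, rfl⟩⟩ ?_
      rintro _ ⟨n, rfl⟩
      show Rn n (x + y) ≤ Rsup x + Rsup y
      rw [hadd n]
      exact add_le_add (hRnleRsup n x) (hRnleRsup n y)
    · have hmono : ∀ (k m : ℕ), k ≤ m → ∀ z, Rn k z ≤ Rn m z := by
        intro k m hkm z
        refine le_csInf (phi_set_nonempty R (fun w : E => m • S w) z) ?_
        rintro _ ⟨h, hh, rfl⟩
        refine le_trans (hRnle k z h hh) ?_
        have hle : k • S (z - h) ≤ m • S (z - h) := by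
          calc k • S (z - h) ≤ k • S (z-h) + (m - k) • S (z - h) :=
                le_add_of_nonneg_right (nsmul_nonneg (hSpos _) _)
          _ = m • S (z - h) := by rw [← add_nsmul, Nat.add_sub_cancel' hkm]
        exact add_le_add_right hle _
      have key : ∀ n m : ℕ, Rn n x + Rn m y ≤ Rsup (x + y) := by
        intro n m
        calc Rn n x + Rn m y ≤ Rn (max n m) x + Rn (max n m) y :=
              add_le_add (hmono n _ (le_max_left n m) x) (hmono m _ (le_max_right n m) y)
        _ = Rn (max n m) (x + y) := (hadd _).symm
        _ ≤ Rsup (x + y) := hRnleRsup _ _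
      have step1 : ∀ m : ℕ, Rsup x + Rn m y ≤ Rsup (x + y) := by
        intro m
        have h1 : ∀ n : ℕ, Rn n x ≤ Rsup (x+y) - Rn m y := fun n =>
          le_sub_iff_add_le.mpr (key n m)
        have h2 : Rsup x ≤ Rsup (x+y) - Rn m y :=
          csSup_le ⟨Rn 0 x, ⟨0, rfl⟩⟩ (by rintro _ ⟨n, rfl⟩; exact h1 n)
        have h3 := add_le_add_left h2 (Rn m y)
        rwa [sub_add_cancel] at h3
      have h1 : ∀ m : ℕ, Rn m y ≤ Rsup (x+y) - Rsup x := fun m =>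
        le_sub_iff_add_le.mpr (by rw [add_comm]; exact step1 m)
      have h3 : Rsup y ≤ Rsup (x+y) - Rsup x :=
        csSup_le ⟨Rn 0 y, ⟨0, rfl⟩⟩ (by rintro _ ⟨n, rfl⟩; exact h1 n)
      have h4 := add_le_add_left h3 (Rsup x)
      rw [sub_add_cancel] at h4
      rwa [add_comm] at h4
  set D := fun x => R x - Rsup x with hD
  have hDpos : ∀ x, 0 ≤ D x := fun x => sub_nonneg.mpr (hRsupleR x)
  have hDleR : ∀ x, D x ≤ R x := fun x => sub_le_self _ (hRsuppos x)
  have hDorth : OrthAdd D := by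
    intro a b hab
    simp only [hD, hR.1 a b hab, hRsuporth a b hab]; abel
  have hDU : Uryson D :=
    ⟨hDorth, orderBounded_sandwich hR.2 hDpos hDleR⟩
  have hDS : UDisjointPos D S := by
    intro R' hR'U hle1 hle2 x
    have claim : ∀ n : ℕ, Rn n x + R' x ≤ Rn (n+1) x := by
      intro n
      refine le_csInf (phi_set_nonempty R (fun w : E => (n+1) • S w) x) ?_
      rintro _ ⟨h, hh, rfl⟩
      have hfrag : |h| ⊓ |x - h| = 0 := hh
      have e1 : Rn n x = Rn n h + Rn n (x - h) := by
        have h5 := hRnorth n h (x - h) hfrag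
        rw [show h + (x - h) = x by abel] at h5
        exact h5
      have e2 : R' x = R' h + R' (x - h) := by
        have h5 := hR'U.1 h (x - h) hfrag
        rw [show h + (x - h) = x by abel] at h5
        exact h5
      have b1 : Rn n (x - h) ≤ n • S (x - h) :=
        phi_le_right hR.1 hRpos (hBpos n) (x - h)
      have b2 : R' h ≤ R h - Rn n h := by
        refine (hle1 h).trans ?_
        exact sub_le_sub_left (hRnleRsup n h) (R h)
      have b3 : R' (x - h) ≤ S (x - h) := hle2 _
      show Rn n x + R' x ≤ R h + (n+1) • S (x - h)
      calc Rn n x + R' x = (Rn n h + Rn n (x - h)) + (R' h + R' (x - h)) := by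
            rw [← e1, ← e2]
      _ ≤ (Rn n h + n • S (x - h)) + ((R h - Rn n h) + S (x - h)) :=
            add_le_add (add_le_add_right b1 _) (add_le_add b2 b3)
      _ = R h + (n + 1) • S (x - h) := by rw [succ_nsmul]; abel
    have hind : ∀ n : ℕ, Rn 0 x + n • R' x ≤ Rn n x := by
      intro n
      induction n with
      | zero => simp
      | succ m ih =>
          calc Rn 0 x + (m+1) • R' x = (Rn 0 x + m • R' x) + R' x := by
                rw [succ_nsmul]; abel
          _ ≤ Rn m x + R' x := add_le_add_left ih _
          _ ≤ Rn (m+1) x := claim m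
    have harch : ∀ n : ℕ, n • R' x ≤ R x := by
      intro n
      have h2 : n • R' x ≤ Rn n x - Rn 0 x := le_sub_iff_add_le.mpr (by
        rw [add_comm]; exact hind n)
      refine h2.trans ?_
      calc Rn n x - Rn 0 x ≤ Rn n x := sub_le_self _ (hRnpos 0 x)
      _ ≤ R x := hRnleR n x
    exact ccl_arch harch
  have hRD := hRband D hDU hDpos hDS
  have hDzero : ∀ x, D x ≤ 0 := hRD D hDU hDleR (fun x => le_rfl)
  have hDe : D e = 0 := le_antisymm (hDzero e) (hDpos e)
  have h2 : R e - Rsup e = 0 := hDe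
  exact sub_eq_zero.mp h2

end FACTS

/-- Band-projection formula for `π_S`, the projection onto the band `{S}^⊥⊥` generated by
a positive abstract Uryson operator `S`. `R` plays the role of `π_S T`: it is a positive
Uryson operator, `R ≤ T`, `R ∈ {S}^⊥⊥` (disjoint from every positive Uryson operator
disjoint from `S`), and `T - R` is disjoint from `S`. Then
`R e = sup_{ε>0} inf { ρ (T f) + ρ^⊥ (T e) : ρ (S (e - f)) ≤ ε • S e, f ⊑ e, ρ ∈ B(F) }`. -/
theorem stmt8 {E F : Type} [Lattice E] [AddCommGroup E]
    [CovariantClass E E (· + ·) (· ≤ ·)] [Module ℝ E]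
    [ConditionallyCompleteLattice F] [AddCommGroup F]
    [CovariantClass F F (· + ·) (· ≤ ·)] [Module ℝ F] [PosSMulMono ℝ F]
    (S : E → F) (hS : Uryson S) (hSpos : ∀ x, 0 ≤ S x)
    (T : E → F) (hT : Uryson T) (hTpos : ∀ x, 0 ≤ T x)
    (R : E → F) (hR : Uryson R) (hRpos : ∀ x, 0 ≤ R x) (hRT : ∀ x, R x ≤ T x)
    (hRband : ∀ U : E → F, Uryson U → (∀ x, 0 ≤ U x) →
      UDisjointPos U S → UDisjointPos R U)
    (hcompl : UDisjointPos (fun x => T x - R x) S) :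
    ∀ e : E,
      R e = sSup {v : F | ∃ ε : ℝ, 0 < ε ∧
        v = sInf {w : F | ∃ (ρ : F → F) (f : E), IsBandProj ρ ∧ Fragment f e ∧
          ρ (S (e - f)) ≤ ε • S e ∧ w = ρ (T f) + (T e - ρ (T e))}} := by
  intro e
  set W : ℝ → Set F := fun ε => {w : F | ∃ (ρ : F → F) (f : E), IsBandProj ρ ∧ Fragment f e ∧
    ρ (S (e - f)) ≤ ε • S e ∧ w = ρ (T f) + (T e - ρ (T e))} with hW
  set V : Set F := {v : F | ∃ ε : ℝ, 0 < ε ∧ v = sInf (W ε)} with hV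
  show R e = sSup V
  -- basic facts about G := T - R
  have hGorth : OrthAdd (fun z : E => T z - R z) := by
    intro a b hab
    simp only [hT.1 a b hab, hR.1 a b hab]; abel
  have hGpos : ∀ z, 0 ≤ T z - R z := fun z => sub_nonneg.mpr (hRT z)
  have hsplit : ∀ (A : E → F), OrthAdd A → ∀ f : E, Fragment f e → A e = A f + A (e - f) := by
    intro A hA f hf
    have := hA f (e - f) hf
    rwa [show f + (e - f) = e by abel] at this
  have hS0 : S 0 = 0 := orthAdd_zero hS.1
  -- the identity band projection
  have hid : IsBandProj (fun x : F => x) :=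
    ⟨fun x y => rfl, fun x => rfl, fun x hx => ⟨hx, le_rfl⟩⟩
  -- membership of T e in each W ε with ε ≥ 0
  have hTeW : ∀ ε : ℝ, 0 ≤ ε → T e ∈ W ε := by
    intro ε hε
    refine ⟨fun x => x, e, hid, frag_self e, ?_, by abel⟩
    rw [sub_self, hS0]
    exact smul_nonneg hε (hSpos e)
  have hWne : ∀ ε : ℝ, 0 ≤ ε → (W ε).Nonempty := fun ε hε => ⟨T e, hTeW ε hε⟩
  have hWbdd : ∀ ε : ℝ, BddBelow (W ε) := by
    intro ε
    refine ⟨0, ?_⟩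
    rintro _ ⟨ρ, f, hρ, hf, hcon, rfl⟩
    exact add_nonneg (hρ.2.2 (T f) (hTpos f)).1 (sub_nonneg.mpr (hρ.2.2 (T e) (hTpos e)).2)
  have hVne : V.Nonempty := ⟨sInf (W 1), 1, one_pos, rfl⟩
  have hVbdd : BddAbove V := by
    refine ⟨T e, ?_⟩
    rintro _ ⟨ε, hε, rfl⟩
    exact csInf_le (hWbdd ε) (hTeW ε hε.le)
  -- ================= Direction II : sSup V ≤ R e =================
  have dirII : sSup V ≤ R e := by
    refine csSup_le hVne ?_
    rintro _ ⟨ε, hε, rfl⟩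
    set u := ε • S e with hu
    have hu0 : 0 ≤ u := smul_nonneg hε.le (hSpos e)
    set g₀ := ppr u (T e - R e) with hg₀
    have hGe0 : 0 ≤ T e - R e := hGpos e
    have hg₀0 : 0 ≤ g₀ := ppr_nonneg hGe0 u
    have hg₀idem : ppr u g₀ = g₀ := ppr_idem hu0 hGe0
    have step : ∀ n : ℕ, 0 < n → sInf (W ε) ≤ R e + (g₀ - n • u)⁺ := by
      intro n hn
      have bound : ∀ f : E, Fragment f e →
          sInf (W ε) - (R e + (g₀ - n • u)⁺) ≤ (T f - R f) + n • S (e - f) := by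
        intro f hf
        set s := S (e - f) with hs
        have hs0 : 0 ≤ s := hSpos _
        set uf := (s - u)⁺ with huf
        have huf0 : 0 ≤ uf := posPart_nonneg _
        have hufs : uf ≤ s := lg_posPart_le (sub_le_self s hu0) hs0
        have hρ : IsBandProj (cpr uf) := cpr_isBandProj huf0
        have hadm : cpr uf (S (e - f)) ≤ ε • S e := by
          rw [← hs, ← hu, cpr_apply_nonneg huf0 hs0]
          have h1 : s - u ≤ ppr uf s := le_trans (le_posPart _) (le_ppr_of_le huf0 hs0 hufs)
          have h2 := sub_le_iff_le_add.mp h1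
          rw [sub_le_iff_le_add]
          rw [add_comm]
          exact h2
        have hmem : cpr uf (T f) + (T e - cpr uf (T e)) ∈ W ε :=
          ⟨cpr uf, f, hρ, hf, hadm, rfl⟩
        have hlow : sInf (W ε) ≤ cpr uf (T f) + (T e - cpr uf (T e)) :=
          csInf_le (hWbdd ε) hmem
        have hTsplit : T e = T f + T (e - f) := hsplit T hT.1 f hf
        have hwf : cpr uf (T f) + (T e - cpr uf (T e)) = T f + ppr uf (T (e - f)) := by
          have h1 : cpr uf (T e) = cpr uf (T f) + cpr uf (T (e - f)) := by
            rw [hTsplit]; exact hρ.1 _ _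
          rw [h1, cpr_apply_nonneg huf0 (hTpos (e - f)), hTsplit]
          abel
        have hTRG : T (e - f) = R (e - f) + (T (e - f) - R (e - f)) := by abel
        have hpprsplit : ppr uf (T (e - f)) =
            ppr uf (R (e - f)) + ppr uf (T (e - f) - R (e - f)) := by
          conv_lhs => rw [hTRG]
          exact ppr_add huf0 (hRpos _) (hGpos _)
        set r := ppr uf (T (e - f) - R (e - f)) with hr
        have hr0 : 0 ≤ r := ppr_nonneg (hGpos _) uf
        have hwfle : cpr uf (T f) + (T e - cpr uf (T e)) ≤ R e + (T f - R f) + r := by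
          rw [hwf, hpprsplit]
          have hRsplit : R e = R f + R (e - f) := hsplit R hR.1 f hf
          calc T f + (ppr uf (R (e - f)) + r) ≤ T f + (R (e - f) + r) :=
                add_le_add_right (add_le_add_left (ppr_le_self (hRpos _) uf) r) _
          _ = R e + (T f - R f) + r := by rw [hRsplit]; abel
        -- bound r
        have hrb : r ≤ n • s + (g₀ - n • u)⁺ := by
          set v := (u - s)⁺ with hv
          have hv0 : 0 ≤ v := posPart_nonneg _
          have hufv : uf ⊓ v = 0 := by
            have h5 := posPart_inf_negPart_eq_zero (s - u)
            rwa [← posPart_neg (s - u), neg_sub] at h5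
          have hrv : r ⊓ v = 0 := ppr_disjoint_of_disjoint huf0 (hGpos _) hv0 hufv
          have husv : u ≤ s + v := lg_le_add_posPart u s
          have h1 : r ⊓ (n • u) ≤ n • s := by
            have hna : n • u ≤ n • s + n • v := by
              calc n • u ≤ n • (s + v) := help_nsmul_le_nsmul husv n
              _ = n • s + n • v := nsmul_add s v n
            have hnv : r ⊓ (n • v) = 0 := by
              rw [inf_comm]
              exact lg_disjoint_nsmul hv0 hr0 (by rw [inf_comm]; exact hrv) n
            calc r ⊓ (n • u) ≤ r ⊓ (n • s + n • v) := inf_le_inf_left r hna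
            _ = (n • s + n • v) ⊓ r := inf_comm _ _
            _ ≤ (n • s) ⊓ r + (n • v) ⊓ r :=
                lg_inf_add_inf (nsmul_nonneg hs0 n) (nsmul_nonneg hv0 n) hr0
            _ = (n • s) ⊓ r + r ⊓ (n • v) := by rw [inf_comm (n • v) r]
            _ = (n • s) ⊓ r := by rw [hnv, add_zero]
            _ ≤ n • s := inf_le_left
          have hrg₀ : r ≤ g₀ := by
            refine le_ppr_of_band hu0 hGe0 hr0 ?_ ?_
            · calc r ≤ T (e - f) - R (e - f) := ppr_le_self (hGpos _) uf
              _ ≤ T e - R e := by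
                  have h6 := hsplit (fun z => T z - R z) hGorth f hf
                  have h6' : T e - R e = (T f - R f) + (T (e - f) - R (e - f)) := h6
                  rw [h6']
                  exact le_add_of_nonneg_left (hGpos f)
            · refine le_antisymm (ppr_le_self hr0 u) ?_
              refine csSup_le ⟨(T (e-f) - R (e-f)) ⊓ 0 • uf, ⟨0, rfl⟩⟩ ?_
              rintro _ ⟨k, rfl⟩
              show (T (e-f) - R (e-f)) ⊓ k • uf ≤ ppr u r
              obtain ⟨m, hm⟩ := exists_nat_ge ((k : ℝ) / ε)
              have hkm : k • uf ≤ m • u := by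
                have h5 : uf ≤ S e := by
                  refine hufs.trans ?_
                  have h7 := hsplit S hS.1 f hf
                  rw [h7, ← hs]
                  exact le_add_of_nonneg_left (hSpos f)
                calc k • uf ≤ k • S e := help_nsmul_le_nsmul h5 k
                _ = (k : ℝ) • S e := (Nat.cast_smul_eq_nsmul ℝ k (S e)).symm
                _ ≤ ((m : ℝ) * ε) • S e := help_smul_le_smul_scalar
                      ((div_le_iff₀ hε).mp hm) (hSpos e)
                _ = m • u := by
                    rw [hu, mul_smul, Nat.cast_smul_eq_nsmul]
              calc (T (e-f) - R (e-f)) ⊓ k • uf ≤ r ⊓ (m • u) :=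
                    le_inf (le_ppr (hGpos _) uf k) (inf_le_right.trans hkm)
              _ ≤ ppr u r := le_ppr hr0 u m
          have h2 : (r - n • u)⁺ ≤ (g₀ - n • u)⁺ := posPart_mono (sub_le_sub_right hrg₀ _)
          calc r = r ⊓ (n • u) + (r - n • u)⁺ := (lg_inf_add_posPart r (n • u)).symm
          _ ≤ n • s + (g₀ - n • u)⁺ := add_le_add h1 h2
        -- combine
        rw [sub_le_iff_le_add']
        calc sInf (W ε) ≤ R e + (T f - R f) + r := hlow.trans hwfle
        _ ≤ R e + (T f - R f) + (n • s + (g₀ - n • u)⁺) := add_le_add_right hrb _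
        _ = R e + (g₀ - n • u)⁺ + ((T f - R f) + n • S (e - f)) := by rw [hs]; abel
      -- apply factA
      have hφ := factA S hS hSpos T hT R hR hRT hcompl n hn e
      have h6 : sInf (W ε) - (R e + (g₀ - n • u)⁺) ≤
          phiOp (fun z => T z - R z) (fun z => n • S z) e := by
        refine le_csInf (phi_set_nonempty (fun z => T z - R z) (fun z => n • S z) e) ?_
        rintro _ ⟨f, hf, rfl⟩
        exact bound f hf
      have h7 := h6.trans hφ
      have h8 := sub_nonpos.mp h7
      exact h8
    -- finish direction II
    have hb : ∀ n : ℕ, g₀ ⊓ (n • u) ≤ g₀ - (sInf (W ε) - R e) := by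
      intro n
      cases n with
      | zero =>
          rw [zero_nsmul, inf_eq_right.mpr hg₀0]
          have h9 := step 1 one_pos
          have h10 : sInf (W ε) - R e ≤ (g₀ - 1 • u)⁺ := sub_le_iff_le_add'.mpr h9
          have h11 : (g₀ - 1 • u)⁺ ≤ g₀ := lg_posPart_le
            (sub_le_self _ (nsmul_nonneg hu0 1)) hg₀0
          exact sub_nonneg.mpr (h10.trans h11)
      | succ m =>
          have h9 := step (m+1) (Nat.succ_pos m)
          have h10 : sInf (W ε) - R e ≤ (g₀ - (m+1) • u)⁺ := sub_le_iff_le_add'.mpr h9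
          have h12 : (g₀ - (m+1) • u)⁺ = g₀ - g₀ ⊓ ((m+1) • u) := (lg_sub_inf_self _ _).symm
          rw [h12] at h10
          exact le_sub_comm.mp h10
    have h14 : ppr u g₀ ≤ g₀ - (sInf (W ε) - R e) :=
      csSup_le ⟨g₀ ⊓ 0 • u, ⟨0, rfl⟩⟩ (by rintro _ ⟨n, rfl⟩; exact hb n)
    rw [hg₀idem] at h14
    have h15 : sInf (W ε) - R e ≤ 0 := by
      have := le_sub_comm.mp h14
      calc sInf (W ε) - R e ≤ g₀ - g₀ := this
      _ = 0 := sub_self g₀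
    exact sub_nonpos.mp h15
  -- ================= Direction I : R e ≤ sSup V =================
  have dirI : R e ≤ sSup V := by
    have hBorth : ∀ n : ℕ, OrthAdd (fun z : E => n • S z) := by
      intro n a b hab; simp only [hS.1 a b hab, smul_add]
    have hBpos : ∀ n : ℕ, ∀ z : E, 0 ≤ n • S z := fun n z => nsmul_nonneg (hSpos z) n
    set Rn := fun (n : ℕ) => phiOp R (fun z => n • S z) e with hRndef
    have hRnleR : ∀ n, Rn n ≤ R e := fun n => phi_le_left (hBorth n) hRpos (hBpos n) e
    have hfactC := factC S hS hSpos R hR hRpos hRband e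
    have key : ∀ n : ℕ, 0 < n →
        R e - sSup V ≤ (1 / (n:ℝ)) • S e + (R e - Rn n) := by
      intro n hn
      set ε := 1 / ((n:ℝ) * (n:ℝ)) with hε
      have hε0 : 0 < ε := by positivity
      have low : ∀ w ∈ W ε, R e - (n • (ε • S e) + (R e - Rn n)) ≤ w := by
        rintro _ ⟨ρ, f, hρ, hf, hcon, rfl⟩
        have hTsplit : T e = T f + T (e - f) := hsplit T hT.1 f hf
        have hRsplit : R e = R f + R (e - f) := hsplit R hR.1 f hf
        have hρTe : ρ (T e) = ρ (T f) + ρ (T (e - f)) := by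
          rw [hTsplit]; exact hρ.1 _ _
        have hwval : ρ (T f) + (T e - ρ (T e)) = T f + (T (e - f) - ρ (T (e - f))) := by
          rw [hρTe, hTsplit]; abel
        -- decompose
        have hρsplit : ρ (T (e - f)) = ρ (R (e - f)) + ρ (T (e - f) - R (e - f)) := by
          conv_lhs => rw [show T (e - f) = R (e - f) + (T (e - f) - R (e - f)) by abel]
          exact hρ.1 _ _
        have hge : R e - ρ (R (e - f)) ≤ ρ (T f) + (T e - ρ (T e)) := by
          rw [hwval, hρsplit]
          have h1 : 0 ≤ T f - R f := hGpos f
          have h2 : 0 ≤ (T (e - f) - R (e - f)) - ρ (T (e - f) - R (e - f)) :=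
            sub_nonneg.mpr (hρ.2.2 _ (hGpos (e - f))).2
          have h3 : R e - ρ (R (e - f)) +
              ((T f - R f) + ((T (e - f) - R (e - f)) - ρ (T (e - f) - R (e - f))))
              = T f + (T (e - f) - (ρ (R (e - f)) + ρ (T (e - f) - R (e - f)))) := by
            rw [hRsplit]; abel
          calc R e - ρ (R (e - f))
              ≤ R e - ρ (R (e - f)) +
                ((T f - R f) + ((T (e - f) - R (e - f)) - ρ (T (e - f) - R (e - f)))) :=
                le_add_of_nonneg_right (add_nonneg h1 h2)
          _ = T f + (T (e - f) - (ρ (R (e - f)) + ρ (T (e - f) - R (e - f)))) := h3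
        -- bound ρ (R (e - f))
        have hbnd : ρ (R (e - f)) ≤ n • (ε • S e) + (R e - Rn n) := by
          set a := R (e - f) with ha
          set b := n • S (e - f) with hb2
          have hdecomp : a = a ⊓ b + (a - b)⁺ := (lg_inf_add_posPart a b).symm
          have hρa : ρ a = ρ (a ⊓ b) + ρ ((a - b)⁺) := by
            conv_lhs => rw [hdecomp]
            exact hρ.1 _ _
          have h1 : ρ (a ⊓ b) ≤ n • (ε • S e) := by
            calc ρ (a ⊓ b) ≤ ρ b := bp_mono hρ inf_le_right
            _ = n • ρ (S (e - f)) := bp_nsmul hρ _ n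
            _ ≤ n • (ε • S e) := help_nsmul_le_nsmul hcon n
          have h2 : ρ ((a - b)⁺) ≤ R e - Rn n := by
            have h3 : ρ ((a - b)⁺) ≤ (a - b)⁺ := (hρ.2.2 _ (posPart_nonneg _)).2
            refine h3.trans (lg_posPart_le ?_ (sub_nonneg.mpr (hRnleR n)))
            have h4 : Rn n ≤ R f + n • S (e - f) := phi_le hRpos (hBpos n) hf
            calc a - b = (R f + R (e - f)) - R f - n • S (e - f) := by rw [ha, hb2]; abel
            _ = R e - (R f + n • S (e - f)) := by rw [← hRsplit]; abel
            _ ≤ R e - Rn n := sub_le_sub_left h4 _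
          calc ρ a = ρ (a ⊓ b) + ρ ((a - b)⁺) := hρa
          _ ≤ n • (ε • S e) + (R e - Rn n) := add_le_add h1 h2
        calc R e - (n • (ε • S e) + (R e - Rn n)) ≤ R e - ρ (R (e - f)) :=
              sub_le_sub_left hbnd _
        _ ≤ ρ (T f) + (T e - ρ (T e)) := hge
      have hInf : R e - (n • (ε • S e) + (R e - Rn n)) ≤ sInf (W ε) :=
        le_csInf (hWne ε hε0.le) low
      have hmem : sInf (W ε) ∈ V := ⟨ε, hε0, rfl⟩
      have hle : R e - (n • (ε • S e) + (R e - Rn n)) ≤ sSup V :=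
        hInf.trans (le_csSup hVbdd hmem)
      have hn0 : (n:ℝ) ≠ 0 := by exact_mod_cast hn.ne'
      have hconv : n • (ε • S e) = (1 / (n:ℝ)) • S e := by
        rw [← Nat.cast_smul_eq_nsmul ℝ n (ε • S e), smul_smul, hε]
        congr 1
        field_simp
      rw [hconv] at hle
      exact sub_le_comm.mp hle
    -- Archimedean finish
    have hfin : ∀ m : ℕ, R e - sSup V ≤ R e - Rn m := by
      intro m
      have hmono : ∀ (k l : ℕ), k ≤ l → Rn k ≤ Rn l := by
        intro k l hkl
        refine le_csInf (phi_set_nonempty R (fun w : E => l • S w) e) ?_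
        rintro _ ⟨h, hh, rfl⟩
        show Rn k ≤ R h + l • S (e - h)
        refine le_trans (phi_le hRpos (hBpos k) hh) ?_
        have hle : k • S (e - h) ≤ l • S (e - h) := by
          calc k • S (e - h) ≤ k • S (e-h) + (l - k) • S (e - h) :=
                le_add_of_nonneg_right (nsmul_nonneg (hSpos _) _)
          _ = l • S (e - h) := by rw [← add_nsmul, Nat.add_sub_cancel' hkl]
        exact add_le_add_right hle _
      have harch : R e - sSup V - (R e - Rn m) ≤ 0 := by
        refine ccl_le_of_forall_le_smul (hSpos e) ?_
        intro k hk
        have h1 := key (k + m) (Nat.add_pos_left hk m)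
        have h2 : R e - Rn (k + m) ≤ R e - Rn m :=
          sub_le_sub_left (hmono m (k+m) (Nat.le_add_left m k)) _
        have h3 : (1 / ((k+m:ℕ):ℝ)) • S e ≤ (1 / (k:ℝ)) • S e := by
          refine help_smul_le_smul_scalar ?_ (hSpos e)
          have hk' : (0:ℝ) < k := by exact_mod_cast hk
          have hkm : (k:ℝ) ≤ ((k+m:ℕ):ℝ) := by exact_mod_cast Nat.le_add_right k m
          exact one_div_le_one_div_of_le hk' hkm
        have h4 : R e - sSup V ≤ (1 / (k:ℝ)) • S e + (R e - Rn m) :=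
          h1.trans (add_le_add h3 h2)
        rw [sub_le_iff_le_add]
        exact h4
      exact sub_nonpos.mp harch
    have h7 : ∀ m : ℕ, Rn m ≤ sSup V := by
      intro m
      exact (sub_le_sub_iff_left (R e)).mp (hfin m)
    have h10 : sSup (Set.range fun n : ℕ => Rn n) ≤ sSup V :=
      csSup_le ⟨Rn 0, ⟨0, rfl⟩⟩ (by rintro _ ⟨n, rfl⟩; exact h7 n)
    rw [← hfactC] at h10
    exact h10
  exact le_antisymm dirI dirII
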